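/- Let n ≥ 4 be an integer and set m = n−1. Let W be the group of ℤ-linear automorphisms of ℤ^n of the form x ↦ (ε_{σ⁻¹(1)} x_{σ⁻¹(1)}, …, ε_{σ⁻¹(n)} x_{σ⁻¹(n)}) given by pairs (ε, σ) with σ a permutation of {1,…,n} and ε ∈ {±1}^n satisfying ε₁ε₂⋯εₙ = 1 (the Weyl group of type D_n, realized as signed permutation matrices with sign product 1). Let w' ∈ W be the element with permutation part the m-cycle (1 2 … m) and sign vector having −1 exactly in coordinates m and n. Then: (1) every element of W commuting with w' has permutation part equal to a power of the m-cycle (1 2 … m); and (2) the centralizer of w' in W has exactly 2(n−1) elements. -/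

import Mathlib

/-- The action of a signed permutation `(ε, σ)` on `ℤ^n`:
`x ↦ (ε_{σ⁻¹(1)} x_{σ⁻¹(1)}, …, ε_{σ⁻¹(n)} x_{σ⁻¹(n)})`. -/
def sgnPermAct (n : ℕ) (ε : Fin n → ℤ) (σ : Equiv.Perm (Fin n)) :
    (Fin n → ℤ) → (Fin n → ℤ) :=
  fun x i => ε (σ⁻¹ i) * x (σ⁻¹ i)

lemma spa_comp (n : ℕ) (ε η : Fin n → ℤ) (σ τ : Equiv.Perm (Fin n)) :
    sgnPermAct n ε σ ∘ sgnPermAct n η τ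
      = sgnPermAct n (fun j => ε (τ j) * η j) (σ * τ) := by
  funext x i
  simp [sgnPermAct, mul_inv_rev, mul_assoc]

lemma spa_inj (n : ℕ) {ε η : Fin n → ℤ} {σ τ : Equiv.Perm (Fin n)}
    (hε : ∀ i, ε i ≠ 0)
    (h : sgnPermAct n ε σ = sgnPermAct n η τ) : σ = τ ∧ ε = η := by
  have key : ∀ j, σ j = τ j ∧ ε j = η j := by
    intro j
    have h1 := congrFun (congrFun h (Pi.single j 1)) (σ j)
    simp only [sgnPermAct] at h1
    rw [(Equiv.Perm.inv_eq_iff_eq (f := σ) (x := σ j) (y := j)).mpr rfl, Pi.single_eq_same, mul_one] at h1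
    by_cases hjj : τ⁻¹ (σ j) = j
    · have hst : σ j = τ j := by
        have := congrArg τ hjj
        simpa using this
      rw [hjj, Pi.single_eq_same, mul_one] at h1
      exact ⟨hst, h1⟩
    · rw [Pi.single_eq_of_ne hjj, mul_zero] at h1
      exact absurd h1 (hε j)
  exact ⟨Equiv.ext fun j => (key j).1, funext fun j => (key j).2⟩

section
variable (n : ℕ) (c : Equiv.Perm (Fin n))

lemma cyc_pow_val (hn : 4 ≤ n)
    (hc : ∀ i : Fin n, (c i : ℕ) =
      if (i : ℕ) = n - 2 then 0 else if (i : ℕ) = n - 1 then (i : ℕ) else (i : ℕ) + 1) :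
    ∀ (k : ℕ) (i : Fin n), (i : ℕ) < n - 1 → (((c ^ k) i : Fin n) : ℕ) = ((i : ℕ) + k) % (n - 1) := by
  intro k
  induction k with
  | zero => intro i hi; simp [Nat.mod_eq_of_lt hi]
  | succ k ih =>
    intro i hi
    have h1 : (c ^ (k + 1)) i = c ((c ^ k) i) := by
      rw [pow_succ']; rfl
    have hki := ih i hi
    have hlt : (((c ^ k) i : Fin n) : ℕ) < n - 1 := by
      rw [hki]; exact Nat.mod_lt _ (by omega)
    have hgoal : ((i : ℕ) + (k + 1)) % (n - 1) = (((i : ℕ) + k) % (n - 1) + 1) % (n - 1) := by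
      rw [Nat.mod_add_mod, Nat.add_assoc]
    rw [h1, hc, hgoal, ← hki]
    by_cases h2 : (((c ^ k) i : Fin n) : ℕ) = n - 2
    · rw [if_pos h2, h2]
      have h4 : n - 2 + 1 = n - 1 := by omega
      rw [h4, Nat.mod_self]
    · rw [if_neg h2, if_neg (by omega), Nat.mod_eq_of_lt (by omega)]

lemma cyc_pow_fix (hn : 4 ≤ n)
    (hc : ∀ i : Fin n, (c i : ℕ) =
      if (i : ℕ) = n - 2 then 0 else if (i : ℕ) = n - 1 then (i : ℕ) else (i : ℕ) + 1) :
    ∀ (k : ℕ) (i : Fin n), (i : ℕ) = n - 1 → (c ^ k) i = i := by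
  intro k
  induction k with
  | zero => intro i _; simp
  | succ k ih =>
    intro i hi
    have h1 : (c ^ (k + 1)) i = c ((c ^ k) i) := by rw [pow_succ']; rfl
    rw [h1, ih i hi]
    apply Fin.ext
    rw [hc]
    rw [if_neg (by omega), if_pos hi]

lemma cyc_cent (hn : 4 ≤ n)
    (hc : ∀ i : Fin n, (c i : ℕ) =
      if (i : ℕ) = n - 2 then 0 else if (i : ℕ) = n - 1 then (i : ℕ) else (i : ℕ) + 1)
    (σ : Equiv.Perm (Fin n)) (hcomm : σ * c = c * σ) :
    ∃ k, k < n - 1 ∧ σ = c ^ k := by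
  have happ : ∀ x, σ (c x) = c (σ x) := by
    intro x
    have := congrFun (congrArg (fun p : Equiv.Perm (Fin n) => (p : Fin n → Fin n)) hcomm) x
    simpa using this
  have hfix : ∀ i : Fin n, c i = i → (i : ℕ) = n - 1 := by
    intro i hfi
    have := congrArg (Fin.val) hfi
    rw [hc] at this
    by_cases h1 : (i : ℕ) = n - 2
    · rw [if_pos h1] at this; omega
    · rw [if_neg h1] at this
      by_cases h2 : (i : ℕ) = n - 1
      · exact h2
      · rw [if_neg h2] at this; omega
  set L : Fin n := ⟨n - 1, by omega⟩ with hLdef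
  have hLval : (L : ℕ) = n - 1 := rfl
  set Z : Fin n := ⟨0, by omega⟩ with hZdef
  have hZval : (Z : ℕ) = 0 := rfl
  have hcL : c L = L := by
    apply Fin.ext
    rw [hc, hLval]
    rw [if_neg (by omega), if_pos rfl]
  have hσL : σ L = L := by
    have h5 : c (σ L) = σ L := by rw [← happ, hcL]
    have h6 := hfix _ h5
    apply Fin.ext; rw [h6, hLval]
  have hZL : σ Z ≠ L := by
    intro h
    have h7 : σ Z = σ L := by rw [h, hσL]
    have h8 := congrArg Fin.val (σ.injective h7)
    rw [hZval, hLval] at h8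
    omega
  have hk : ((σ Z : Fin n) : ℕ) < n - 1 := by
    have h9 := (σ Z).isLt
    rcases Nat.lt_or_ge ((σ Z : Fin n) : ℕ) (n-1) with h | h
    · exact h
    · exact absurd (Fin.ext (by rw [hLval]; omega)) hZL
  refine ⟨(σ Z : Fin n), hk, ?_⟩
  have hcpow : ∀ t, σ * c ^ t = c ^ t * σ := by
    intro t
    induction t with
    | zero => simp
    | succ t ih => rw [pow_succ, ← mul_assoc, ih, mul_assoc, hcomm, ← mul_assoc]
  have happt : ∀ t x, σ ((c ^ t) x) = (c ^ t) (σ x) := by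
    intro t x
    have := congrFun (congrArg (fun p : Equiv.Perm (Fin n) => (p : Fin n → Fin n)) (hcpow t)) x
    simpa using this
  apply Equiv.ext
  intro i
  by_cases hi : (i : ℕ) = n - 1
  · rw [cyc_pow_fix n c hn hc _ i hi]
    have : i = L := Fin.ext (by rw [hLval, hi])
    rw [this, hσL]
  · have hilt : (i : ℕ) < n - 1 := by have := i.isLt; omega
    have hi0 : i = (c ^ (i : ℕ)) Z := by
      apply Fin.ext
      rw [cyc_pow_val n c hn hc _ Z (by rw [hZval]; omega), hZval, Nat.zero_add,
        Nat.mod_eq_of_lt hilt]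
    have hs0 : σ Z = (c ^ ((σ Z : Fin n) : ℕ)) Z := by
      apply Fin.ext
      rw [cyc_pow_val n c hn hc _ Z (by rw [hZval]; omega), hZval, Nat.zero_add,
        Nat.mod_eq_of_lt hk]
    calc σ i = σ ((c ^ (i : ℕ)) Z) := by rw [← hi0]
    _ = (c ^ (i : ℕ)) (σ Z) := happt _ _
    _ = (c ^ (i : ℕ)) ((c ^ ((σ Z : Fin n) : ℕ)) Z) := by rw [← hs0]
    _ = (c ^ ((σ Z : Fin n) : ℕ)) ((c ^ (i : ℕ)) Z) := by
        rw [← Equiv.Perm.mul_apply, ← Equiv.Perm.mul_apply, ← pow_add, ← pow_add, Nat.add_comm]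
    _ = (c ^ ((σ Z : Fin n) : ℕ)) i := by rw [← hi0]

end

def dBval (b : Bool) : ℤ := if b then 1 else -1

def dBase (n k : ℕ) (b : Bool) (j : Fin n) : ℤ :=
  dBval b * (if n - 1 ≤ (j : ℕ) + k then -1 else 1)

def dEps (n k : ℕ) (b : Bool) (j : Fin n) : ℤ :=
  if (j : ℕ) = n - 1 then
    ∏ i ∈ Finset.univ.filter (fun i : Fin n => ¬ (i : ℕ) = n - 1), dBase n k b i
  else dBase n k b j

lemma dBval_pm (b : Bool) : dBval b = 1 ∨ dBval b = -1 := by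
  cases b <;> simp [dBval]

lemma dBval_ne (b : Bool) : dBval b ≠ 0 := by
  rcases dBval_pm b with h | h <;> rw [h] <;> norm_num

lemma prod_pm {s : Finset (Fin n)} {f : Fin n → ℤ}
    (h : ∀ i ∈ s, f i = 1 ∨ f i = -1) : (∏ i ∈ s, f i) = 1 ∨ (∏ i ∈ s, f i) = -1 := by
  classical
  induction s using Finset.induction_on with
  | empty => simp
  | @insert a s hx ih =>
    rw [Finset.prod_insert hx]
    rcases h a (Finset.mem_insert_self a s) with h1 | h1 <;>
      rcases ih (fun i hi => h i (Finset.mem_insert_of_mem hi)) with h2 | h2 <;>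
        rw [h1, h2] <;> norm_num

lemma dBase_pm (n k : ℕ) (b : Bool) (j : Fin n) : dBase n k b j = 1 ∨ dBase n k b j = -1 := by
  unfold dBase
  rcases dBval_pm b with h | h <;> rw [h] <;> split_ifs <;> norm_num

lemma dEps_pm (n k : ℕ) (b : Bool) (j : Fin n) : dEps n k b j = 1 ∨ dEps n k b j = -1 := by
  unfold dEps
  split_ifs
  · exact prod_pm (fun i _ => dBase_pm n k b i)
  · exact dBase_pm n k b j

lemma dEps_prod (n k : ℕ) (hn : 4 ≤ n) (b : Bool) :
    (∏ i, dEps n k b i) = 1 := by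
  classical
  have hsplit := Finset.prod_filter_mul_prod_filter_not Finset.univ
    (fun i : Fin n => (i : ℕ) = n - 1) (dEps n k b)
  have hL : Finset.univ.filter (fun i : Fin n => (i : ℕ) = n - 1)
      = {(⟨n - 1, by omega⟩ : Fin n)} := by
    ext i
    simp [Fin.ext_iff]
  have h1 : (∏ i ∈ Finset.univ.filter (fun i : Fin n => (i : ℕ) = n - 1), dEps n k b i)
      = ∏ i ∈ Finset.univ.filter (fun i : Fin n => ¬ (i : ℕ) = n - 1), dBase n k b i := by
    rw [hL, Finset.prod_singleton]
    unfold dEps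
    rw [if_pos rfl]
  have h2 : (∏ i ∈ Finset.univ.filter (fun i : Fin n => ¬ (i : ℕ) = n - 1), dEps n k b i)
      = ∏ i ∈ Finset.univ.filter (fun i : Fin n => ¬ (i : ℕ) = n - 1), dBase n k b i := by
    apply Finset.prod_congr rfl
    intro i hi
    rw [Finset.mem_filter] at hi
    unfold dEps
    rw [if_neg hi.2]
  rw [← hsplit, h1, h2]
  rcases prod_pm (fun i (_ : i ∈ Finset.univ.filter (fun i : Fin n => ¬ (i : ℕ) = n - 1)) =>
    dBase_pm n k b i) with h | h <;> rw [h] <;> norm_num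

lemma sign_rec (n : ℕ) (c : Equiv.Perm (Fin n)) (hn : 4 ≤ n)
    (hc : ∀ i : Fin n, (c i : ℕ) =
      if (i : ℕ) = n - 2 then 0 else if (i : ℕ) = n - 1 then (i : ℕ) else (i : ℕ) + 1)
    (ε' : Fin n → ℤ)
    (hε' : ∀ i : Fin n, ε' i = if (i : ℕ) = n - 2 ∨ (i : ℕ) = n - 1 then -1 else 1)
    (k : ℕ) (hk : k < n - 1) (b : Bool) :
    ∀ j : Fin n, dEps n k b (c j) * ε' j = ε' ((c ^ k) j) * dEps n k b j := by
  intro j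
  by_cases hj : (j : ℕ) = n - 1
  · have hcj : c j = j := Fin.ext (by rw [hc, if_neg (by omega), if_pos hj])
    have hckj : (c ^ k) j = j := cyc_pow_fix n c hn hc k j hj
    rw [hcj, hckj, mul_comm]
  · have hjlt : (j : ℕ) < n - 1 := by have := j.isLt; omega
    have hcjval : ((c j : Fin n) : ℕ) = ((j : ℕ) + 1) % (n - 1) := by
      have := cyc_pow_val n c hn hc 1 j hjlt
      rwa [pow_one] at this
    have hckval : (((c ^ k) j : Fin n) : ℕ) = ((j : ℕ) + k) % (n - 1) := cyc_pow_val n c hn hc k j hjlt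
    have hcjlt : ((c j : Fin n) : ℕ) < n - 1 := by rw [hcjval]; exact Nat.mod_lt _ (by omega)
    have hcklt : (((c ^ k) j : Fin n) : ℕ) < n - 1 := by rw [hckval]; exact Nat.mod_lt _ (by omega)
    have e1 : dEps n k b (c j) = dBval b * (if n - 1 ≤ ((c j : Fin n) : ℕ) + k then -1 else 1) := by
      unfold dEps dBase; rw [if_neg (by omega)]
    have e2 : dEps n k b j = dBval b * (if n - 1 ≤ (j : ℕ) + k then -1 else 1) := by
      unfold dEps dBase; rw [if_neg (by omega)]
    rw [e1, e2, hε' j, hε' ((c ^ k) j)]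
    have key : (if n - 1 ≤ ((c j : Fin n) : ℕ) + k then (-1 : ℤ) else 1)
        * (if (j : ℕ) = n - 2 ∨ (j : ℕ) = n - 1 then -1 else 1)
        = (if (((c ^ k) j : Fin n) : ℕ) = n - 2 ∨ (((c ^ k) j : Fin n) : ℕ) = n - 1 then -1 else 1)
        * (if n - 1 ≤ (j : ℕ) + k then -1 else 1) := by
      rcases Nat.lt_or_ge ((j : ℕ) + 1) (n - 1) with h1 | h1
      · rw [Nat.mod_eq_of_lt h1] at hcjval
        rcases Nat.lt_or_ge ((j : ℕ) + k) (n - 1) with h2 | h2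
        · rw [Nat.mod_eq_of_lt h2] at hckval
          rw [hcjval, hckval]
          split_ifs <;> norm_num <;> omega
        · have h3 : ((j : ℕ) + k) % (n - 1) = (j : ℕ) + k - (n - 1) := by
            rw [Nat.mod_eq_sub_mod h2, Nat.mod_eq_of_lt (by omega)]
          rw [h3] at hckval
          rw [hcjval, hckval]
          split_ifs <;> norm_num <;> omega
      · have h1' : (j : ℕ) + 1 = n - 1 := by omega
        rw [h1', Nat.mod_self] at hcjval
        rcases Nat.lt_or_ge ((j : ℕ) + k) (n - 1) with h2 | h2
        · rw [Nat.mod_eq_of_lt h2] at hckval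
          rw [hcjval, hckval]
          split_ifs <;> norm_num <;> omega
        · have h3 : ((j : ℕ) + k) % (n - 1) = (j : ℕ) + k - (n - 1) := by
            rw [Nat.mod_eq_sub_mod h2, Nat.mod_eq_of_lt (by omega)]
          rw [h3] at hckval
          rw [hcjval, hckval]
          split_ifs <;> norm_num <;> omega
    linear_combination dBval b * key

/-- Let `n ≥ 4`, `m = n − 1`, and let `W` be the Weyl group of type `Dₙ`,
realized as the signed permutations `(ε, σ)` of `ℤ^n` with `ε₁⋯εₙ = 1`.
Let `w' ∈ W` have permutation part the `m`-cycle `c = (1 2 … m)` and sign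
vector `ε'` with `−1` exactly in coordinates `m` and `n`. Then
(1) every element of `W` commuting with `w'` has permutation part a power of
`c`, and (2) the centralizer of `w'` in `W` has exactly `2(n−1)` elements. -/
theorem stmt_10 (n : ℕ) (hn : 4 ≤ n)
    (c : Equiv.Perm (Fin n))
    (hc : ∀ i : Fin n, (c i : ℕ) =
      if (i : ℕ) = n - 2 then 0 else if (i : ℕ) = n - 1 then (i : ℕ) else (i : ℕ) + 1)
    (ε' : Fin n → ℤ)
    (hε' : ∀ i : Fin n, ε' i = if (i : ℕ) = n - 2 ∨ (i : ℕ) = n - 1 then -1 else 1) :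
    (∀ (ε : Fin n → ℤ) (σ : Equiv.Perm (Fin n)),
        (∀ i, ε i = 1 ∨ ε i = -1) → (∏ i, ε i) = 1 →
        sgnPermAct n ε σ ∘ sgnPermAct n ε' c = sgnPermAct n ε' c ∘ sgnPermAct n ε σ →
        ∃ k : ℕ, σ = c ^ k) ∧
    Set.ncard {f : (Fin n → ℤ) → (Fin n → ℤ) |
        (∃ (ε : Fin n → ℤ) (σ : Equiv.Perm (Fin n)),
          (∀ i, ε i = 1 ∨ ε i = -1) ∧ (∏ i, ε i) = 1 ∧ f = sgnPermAct n ε σ) ∧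
        f ∘ sgnPermAct n ε' c = sgnPermAct n ε' c ∘ f} = 2 * (n - 1) := by
  classical
  have hε'ne : ∀ i, ε' i ≠ 0 := by
    intro i; rw [hε']; split_ifs <;> norm_num
  -- Part 1
  have part1 : ∀ (ε : Fin n → ℤ) (σ : Equiv.Perm (Fin n)),
      (∀ i, ε i = 1 ∨ ε i = -1) →
      sgnPermAct n ε σ ∘ sgnPermAct n ε' c = sgnPermAct n ε' c ∘ sgnPermAct n ε σ →
      ∃ k : ℕ, k < n - 1 ∧ σ = c ^ k ∧
        ((fun j => ε (c j) * ε' j) = fun j => ε' (σ j) * ε j) := by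
    intro ε σ hsign hcomm
    have hεne : ∀ i, ε i ≠ 0 := by
      intro i; rcases hsign i with h | h <;> rw [h] <;> norm_num
    rw [spa_comp, spa_comp] at hcomm
    have hne : ∀ i, ε (c i) * ε' i ≠ 0 := fun i => mul_ne_zero (hεne _) (hε'ne _)
    obtain ⟨hperm, hsgn⟩ := spa_inj n hne hcomm
    obtain ⟨k, hk, hσ⟩ := cyc_cent n c hn hc σ hperm
    exact ⟨k, hk, hσ, hsgn⟩
  refine ⟨fun ε σ hsign _ hcomm => by
    obtain ⟨k, _, hσ, _⟩ := part1 ε σ hsign hcomm; exact ⟨k, hσ⟩, ?_⟩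
  -- Part 2
  set Z : Fin n := ⟨0, by omega⟩ with hZdef
  have hZval : (Z : ℕ) = 0 := rfl
  have hpowcomm : ∀ k : ℕ, c ^ k * c = c * c ^ k := by
    intro k; rw [← pow_succ, pow_succ']
  have hrange : {f : (Fin n → ℤ) → (Fin n → ℤ) |
        (∃ (ε : Fin n → ℤ) (σ : Equiv.Perm (Fin n)),
          (∀ i, ε i = 1 ∨ ε i = -1) ∧ (∏ i, ε i) = 1 ∧ f = sgnPermAct n ε σ) ∧
        f ∘ sgnPermAct n ε' c = sgnPermAct n ε' c ∘ f}
      = Set.range (fun p : Fin (n - 1) × Bool =>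
          sgnPermAct n (dEps n (p.1 : ℕ) p.2) (c ^ (p.1 : ℕ))) := by
    ext f
    simp only [Set.mem_setOf_eq, Set.mem_range]
    constructor
    · rintro ⟨⟨ε, σ, hsign, hprod, rfl⟩, hcomm⟩
      obtain ⟨k, hk, rfl, hsgn⟩ := part1 ε σ hsign hcomm
      have hsgn' : ∀ j, ε (c j) * ε' j = ε' ((c ^ k) j) * ε j := fun j => congrFun hsgn j
      -- choose b with dBval b = ε Z
      have hbex : ∃ b : Bool, dBval b = ε Z := by
        rcases hsign Z with h | h
        · exact ⟨true, by simp [dBval, h]⟩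
        · exact ⟨false, by simp [dBval, h]⟩
      obtain ⟨b, hb⟩ := hbex
      -- Step A : values on the cycle support
      have stepA : ∀ t, t < n - 1 → ∀ j : Fin n, (j : ℕ) = t → ε j = dEps n k b j := by
        intro t
        induction t with
        | zero =>
          intro _ j hj0
          have hjZ : j = Z := Fin.ext (by rw [hj0, hZval])
          rw [hjZ, ← hb]
          unfold dEps dBase
          rw [if_neg (by rw [hZval]; omega), if_neg (by rw [hZval]; omega), mul_one]
        | succ t ih =>
          intro ht j hjval
          set j' : Fin n := ⟨t, by omega⟩ with hj'def
          have hj'val : (j' : ℕ) = t := rfl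
          have hcj' : c j' = j := by
            apply Fin.ext
            rw [hc, hj'val, if_neg (by omega), if_neg (by omega), hjval]
          have hIH : ε j' = dEps n k b j' := ih (by omega) j' hj'val
          have h1 := hsgn' j'
          have h2 := sign_rec n c hn hc ε' hε' k hk b j'
          rw [hIH] at h1
          rw [← h2] at h1
          have h3 := mul_right_cancel₀ (hε'ne j') h1
          rw [← hcj', h3]
      -- Step B : value at the last coordinate
      have hL : Finset.univ.filter (fun i : Fin n => (i : ℕ) = n - 1)
          = {(⟨n - 1, by omega⟩ : Fin n)} := by
        ext i; simp [Fin.ext_iff]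
      have stepB : ∀ j : Fin n, (j : ℕ) = n - 1 → ε j = dEps n k b j := by
        intro j hj
        have hjL : j = (⟨n - 1, by omega⟩ : Fin n) := Fin.ext (by exact hj)
        have hsplit := Finset.prod_filter_mul_prod_filter_not Finset.univ
          (fun i : Fin n => (i : ℕ) = n - 1) ε
        rw [hprod] at hsplit
        have hPε : (∏ i ∈ Finset.univ.filter (fun i : Fin n => (i : ℕ) = n - 1), ε i) = ε j := by
          rw [hL, Finset.prod_singleton, ← hjL]
        have hQ : (∏ i ∈ Finset.univ.filter (fun i : Fin n => ¬ (i : ℕ) = n - 1), ε i)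
            = ∏ i ∈ Finset.univ.filter (fun i : Fin n => ¬ (i : ℕ) = n - 1), dEps n k b i := by
          apply Finset.prod_congr rfl
          intro i hi
          rw [Finset.mem_filter] at hi
          exact stepA (i : ℕ) (by have := i.isLt; omega) i rfl
        have hQ2 : (∏ i ∈ Finset.univ.filter (fun i : Fin n => ¬ (i : ℕ) = n - 1), dEps n k b i)
            = ∏ i ∈ Finset.univ.filter (fun i : Fin n => ¬ (i : ℕ) = n - 1), dBase n k b i := by
          apply Finset.prod_congr rfl
          intro i hi
          rw [Finset.mem_filter] at hi
          unfold dEps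
          rw [if_neg hi.2]
        have hdEpsL : dEps n k b j
            = ∏ i ∈ Finset.univ.filter (fun i : Fin n => ¬ (i : ℕ) = n - 1), dBase n k b i := by
          unfold dEps; rw [if_pos hj]
        rw [hPε, hQ, hQ2] at hsplit
        rw [hdEpsL]
        rcases prod_pm (fun i (_ : i ∈ Finset.univ.filter (fun i : Fin n => ¬ (i : ℕ) = n - 1)) =>
          dBase_pm n k b i) with h | h <;> rw [h] at hsplit ⊢ <;> linarith
      have hεeq : ε = dEps n k b := by
        funext j
        by_cases hj : (j : ℕ) = n - 1
        · exact stepB j hj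
        · exact stepA (j : ℕ) (by have := j.isLt; omega) j rfl
      exact ⟨(⟨k, hk⟩, b), by rw [hεeq]⟩
    · rintro ⟨⟨k, b⟩, rfl⟩
      simp only
      have hk : (k : ℕ) < n - 1 := k.isLt
      refine ⟨⟨dEps n (k : ℕ) b, c ^ (k : ℕ), fun i => dEps_pm n (k : ℕ) b i,
        dEps_prod n (k : ℕ) hn b, rfl⟩, ?_⟩
      rw [spa_comp, spa_comp]
      have hA : (fun j => dEps n (k : ℕ) b (c j) * ε' j)
          = fun j => ε' ((c ^ (k : ℕ)) j) * dEps n (k : ℕ) b j :=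
        funext (sign_rec n c hn hc ε' hε' (k : ℕ) hk b)
      rw [hA, hpowcomm]
  rw [hrange]
  have hGinj : Function.Injective (fun p : Fin (n - 1) × Bool =>
      sgnPermAct n (dEps n (p.1 : ℕ) p.2) (c ^ (p.1 : ℕ))) := by
    intro p q h
    simp only at h
    have hne : ∀ i, dEps n (p.1 : ℕ) p.2 i ≠ 0 := by
      intro i; rcases dEps_pm n (p.1 : ℕ) p.2 i with h1 | h1 <;> rw [h1] <;> norm_num
    obtain ⟨hperm, heps⟩ := spa_inj n hne h
    have hp1 : p.1 = q.1 := by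
      have h1 := congrArg (fun τ : Equiv.Perm (Fin n) => ((τ Z : Fin n) : ℕ)) hperm
      rw [cyc_pow_val n c hn hc (p.1 : ℕ) Z (by rw [hZval]; omega),
        cyc_pow_val n c hn hc (q.1 : ℕ) Z (by rw [hZval]; omega), hZval, Nat.zero_add,
        Nat.zero_add, Nat.mod_eq_of_lt p.1.isLt, Nat.mod_eq_of_lt q.1.isLt] at h1
      exact Fin.ext h1
    have hzero : ∀ (k : Fin (n - 1)) (b : Bool), dEps n (k : ℕ) b Z = dBval b := by
      intro k b
      unfold dEps dBase
      rw [if_neg (by rw [hZval]; omega), if_neg (by rw [hZval]; have := k.isLt; omega), mul_one]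
    have hp2 : p.2 = q.2 := by
      have h2 := congrFun heps Z
      rw [hzero p.1 p.2, hzero q.1 q.2] at h2
      cases hb1 : p.2 <;> cases hb2 : q.2 <;> rw [hb1, hb2] at h2 <;>
        simp [dBval] at h2
    exact Prod.ext hp1 hp2
  rw [← Set.image_univ, Set.ncard_image_of_injective _ hGinj, Set.ncard_univ]
  simp only [Nat.card_eq_fintype_card, Fintype.card_prod, Fintype.card_fin, Fintype.card_bool]
  ring
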